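/- Let M_n be the n×n matrix with entries (M_n)_{ij} = 1 if i + j ≤ n and (M_n)_{ij} = -1 if i + j > n (indices 1 ≤ i, j ≤ n). Then for every integer n ≥ 2, det(M_n) = (-1)^n · 2 · det(M_{n-1}). -/
import Mathlib


/-- The n×n matrix with entries `1` if `i + j ≤ n` and `-1` otherwise,
for 1-based indices `1 ≤ i, j ≤ n`. -/
def Mmat (n : ℕ) : Matrix (Fin n) (Fin n) ℝ :=
  fun i j => if (i : ℕ) + 1 + ((j : ℕ) + 1) ≤ n then 1 else -1

theorem stmt_0 (n : ℕ) (hn : 2 ≤ n) :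
    (Mmat n).det = (-1 : ℝ) ^ n * 2 * (Mmat (n - 1)).det := by
  obtain ⟨m, rfl⟩ : ∃ m, n = m + 2 := ⟨n - 2, by omega⟩
  set A : Matrix (Fin (m + 2)) (Fin (m + 2)) ℝ := Mmat (m + 2) with hA
  set j1 : Fin (m + 2) := Fin.last (m + 1) with hj1
  set j0 : Fin (m + 2) := ⟨m, by omega⟩ with hj0
  have hne : j1 ≠ j0 := by
    simp [hj1, hj0, Fin.ext_iff]
  have hdet := Matrix.det_updateCol_add_smul_self A hne (-1 : ℝ)
  set B := A.updateCol j1 (fun k => A k j1 + (-1 : ℝ) • A k j0) with hB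
  have hBcol : ∀ i : Fin (m + 2), B i j1 = if i = 0 then -2 else 0 := by
    intro i
    rw [hB, Matrix.updateCol_self]
    rcases eq_or_ne i 0 with rfl | hi
    · simp [hA, Mmat, hj1, hj0]
      rw [if_pos (by omega)]
      norm_num
    · have hi' : 1 ≤ (i : ℕ) := by
        rcases Nat.eq_zero_or_pos (i : ℕ) with h | h
        · exact absurd (Fin.ext h) hi
        · exact h
      simp only [hA, Mmat, hj1, hj0, smul_eq_mul, Fin.val_last]
      rw [if_neg (by omega), if_neg (by omega)]
      simp [hi]
  have hsub : B.submatrix (Fin.succAbove 0) (Fin.succAbove j1) = Mmat (m + 1) := by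
    ext i j
    have hc : (Fin.succAbove j1 j : ℕ) = j := by
      simp [hj1, Fin.succAbove_last]
    have hcne : Fin.succAbove j1 j ≠ j1 := Fin.succAbove_ne j1 j
    simp only [Matrix.submatrix_apply, hB, Matrix.updateCol_ne hcne, hA, Mmat]
    have hr : (Fin.succAbove (0 : Fin (m + 2)) i : ℕ) = i + 1 := by
      simp [Fin.succAbove_zero]
    rw [hr, hc]
    congr 1
    simp only [eq_iff_iff]
    omega
  rw [← hdet, Matrix.det_succ_column _ j1]
  rw [Finset.sum_eq_single 0]
  · rw [hBcol, if_pos rfl, hsub]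
    simp only [hj1, Fin.val_last, Fin.val_zero, zero_add]
    have : (m + 2 : ℕ) - 1 = m + 1 := by omega
    rw [this]
    ring_nf
  · intro i _ hi
    rw [hBcol, if_neg hi]; ring
  · intro h; exact absurd (Finset.mem_univ 0) h
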